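/- Let n ≥ max(2m,3) with m ≥ 1, let s ≥ −1/2 be a rational number, and let C : ℕ³ → ℝ be a finitely supported family such that C_{rpq} ≠ 0 implies p ≥ 1 and r + q − 1 = s·p. Define F : ℂⁿ × ℝ → ℝ by F(z,u) := Σ_{r,p,q} C_{rpq} u^r |zₙ|^{2p} ⟨z,z⟩^q. Then for every U ∈ S with parameter μ, setting λ := |μ|^{1/(s+1)}, one has F(λ U z, λ² u) = λ² F(z, u) for all (z,u) ∈ ℂⁿ × ℝ; consequently the map (z,w) ↦ (λ U z, λ² w) maps the hypersurface M := {(z,w) ∈ ℂⁿ × ℂ : Im w = ⟨z,z⟩ + F(z, Re w)} onto itself. (This is the verification in part (iii) of the paper's Theorem 2 that all maps (mapwithlambda2) are automorphisms of M.) -/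

import Mathlib

set_option linter.unreachableTactic false
set_option linter.unusedTactic false
set_option linter.unusedVariables false
set_option maxHeartbeats 1000000


/- The standard Hermitian matrix of signature (n-m, m) in the anti-diagonal
block form (formformaminus) of the paper; for the parameters (n-2, m-1) it is
the central block H′ of Hmat n m. -/
def Hmat (n m : ℕ) : Matrix (Fin n) (Fin n) ℂ := fun i j =>
  if i.1 + j.1 + 1 = n ∧ (i.1 < m ∨ n ≤ i.1 + m) then 1
  else if i = j ∧ m ≤ i.1 ∧ i.1 + m < n then 1 else 0

/-- The matrix of block form (formalgebra): first row (μ, −μ x̄ᵀH′A, c),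
middle rows (0, A, x), last row (0, 0, 1/μ̄). -/
noncomputable def mkS (n m : ℕ) (μ c : ℂ) (x : Fin (n - 2) → ℂ)
    (A : Matrix (Fin (n - 2)) (Fin (n - 2)) ℂ) : Matrix (Fin n) (Fin n) ℂ :=
  fun i j =>
    if hi0 : i.1 = 0 then
      if hj0 : j.1 = 0 then μ
      else if hjn : j.1 = n - 1 then c
      else -μ * ∑ k, ∑ l, (starRingEnd ℂ) (x k) * Hmat (n - 2) (m - 1) k l *
        A l ⟨j.1 - 1, by have := j.isLt; omega⟩
    else if hin : i.1 = n - 1 then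
      (if j.1 = n - 1 then 1 / (starRingEnd ℂ) μ else 0)
    else
      if hj0 : j.1 = 0 then 0
      else if hjn : j.1 = n - 1 then x ⟨i.1 - 1, by have := i.isLt; omega⟩
      else A ⟨i.1 - 1, by have := i.isLt; omega⟩ ⟨j.1 - 1, by have := j.isLt; omega⟩

lemma Hreal (a b : ℕ) (k l : Fin a) : (starRingEnd ℂ) (Hmat a b k l) = Hmat a b k l := by
  unfold Hmat; split_ifs <;> simp

lemma Hsym (a b : ℕ) (k l : Fin a) : Hmat a b k l = Hmat a b l k := by
  have hk := k.isLt; have hl := l.isLt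
  unfold Hmat
  simp only [Fin.ext_iff]
  split_ifs <;> first | rfl | (exfalso; omega) | simp_all

lemma sum_split {n : ℕ} (hn : 3 ≤ n) {β : Type*} [AddCommMonoid β] (f : Fin n → β) :
    ∑ i, f i = f ⟨0, by omega⟩ + (∑ j : Fin (n-2), f ⟨j.1+1, by omega⟩) + f ⟨n-1, by omega⟩ := by
  obtain ⟨k, rfl⟩ : ∃ k, n = k + 2 := ⟨n - 2, by omega⟩
  show ∑ i, f i = f ⟨0, by omega⟩ + (∑ j : Fin k, f ⟨j.1+1, by omega⟩) + f ⟨k+1, by omega⟩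
  rw [Fin.sum_univ_castSucc, Fin.sum_univ_succ]
  have h0 : (0 : Fin (k+1)).castSucc = (⟨0, by omega⟩ : Fin (k+2)) := rfl
  have hl : (Fin.last (k+1)) = (⟨k+1, by omega⟩ : Fin (k+2)) := rfl
  rw [h0, hl]
  have : (∑ i : Fin k, f (i.succ).castSucc) = ∑ j : Fin k, f ⟨j.1+1, by omega⟩ := by
    apply Finset.sum_congr rfl
    intro j _
    congr 1
  rw [this]

def midv (n : ℕ) (z : Fin n → ℂ) (k : Fin (n-2)) : ℂ := z ⟨k.1+1, by have := k.isLt; omega⟩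

section hm
variable {m n : ℕ}

lemma H0j (hm : 1 ≤ m) (hn : 3 ≤ n) (j : Fin n) :
    Hmat n m ⟨0, by omega⟩ j = if j = ⟨n-1, by omega⟩ then 1 else 0 := by
  have hj := j.isLt
  unfold Hmat
  simp only [Fin.ext_iff]
  split_ifs <;> first | rfl | (exfalso; omega) | simp_all

lemma HNj (hm : 1 ≤ m) (hn : 3 ≤ n) (j : Fin n) :
    Hmat n m ⟨n-1, by omega⟩ j = if j = ⟨0, by omega⟩ then 1 else 0 := by
  have hj := j.isLt
  unfold Hmat
  simp only [Fin.ext_iff]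
  split_ifs <;> first | rfl | (exfalso; omega) | simp_all

lemma Hmid0 (hm : 1 ≤ m) (hn : 3 ≤ n) (k : Fin (n-2)) :
    Hmat n m ⟨k.1+1, by have := k.isLt; omega⟩ ⟨0, by omega⟩ = 0 := by
  have hk := k.isLt
  unfold Hmat
  simp only [Fin.ext_iff]
  split_ifs <;> first | rfl | (exfalso; omega) | simp_all

lemma HmidN (hm : 1 ≤ m) (hn : 3 ≤ n) (k : Fin (n-2)) :
    Hmat n m ⟨k.1+1, by have := k.isLt; omega⟩ ⟨n-1, by omega⟩ = 0 := by
  have hk := k.isLt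
  unfold Hmat
  simp only [Fin.ext_iff]
  split_ifs <;> first | rfl | (exfalso; omega) | simp_all

lemma Hcentral (hm : 1 ≤ m) (hn : 3 ≤ n) (k l : Fin (n-2)) :
    Hmat n m ⟨k.1+1, by have := k.isLt; omega⟩ ⟨l.1+1, by have := l.isLt; omega⟩
      = Hmat (n-2) (m-1) k l := by
  have hk := k.isLt; have hl := l.isLt
  unfold Hmat
  simp only [Fin.ext_iff]
  split_ifs <;> first | rfl | (exfalso; omega) | simp_all

lemma Hrow0 (hm : 1 ≤ m) (hn : 3 ≤ n) (u : Fin n → ℂ) :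
    (Hmat n m).mulVec u ⟨0, by omega⟩ = u ⟨n-1, by omega⟩ := by
  simp only [Matrix.mulVec, dotProduct]
  simp only [H0j hm hn]
  simp

lemma HrowN (hm : 1 ≤ m) (hn : 3 ≤ n) (u : Fin n → ℂ) :
    (Hmat n m).mulVec u ⟨n-1, by omega⟩ = u ⟨0, by omega⟩ := by
  simp only [Matrix.mulVec, dotProduct]
  simp only [HNj hm hn]
  simp

lemma Hrowmid (hm : 1 ≤ m) (hn : 3 ≤ n) (u : Fin n → ℂ) (k : Fin (n-2)) :
    (Hmat n m).mulVec u ⟨k.1+1, by have := k.isLt; omega⟩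
      = (Hmat (n-2) (m-1)).mulVec (midv n u) k := by
  simp only [Matrix.mulVec, dotProduct]
  rw [sum_split hn]
  rw [Hmid0 hm hn, HmidN hm hn]
  simp only [zero_mul, add_zero, zero_add]
  apply Finset.sum_congr rfl
  intro l _
  rw [Hcentral hm hn]
  rfl

lemma Qdecomp (hm : 1 ≤ m) (hn : 3 ≤ n) (z : Fin n → ℂ) :
    dotProduct z ((Hmat n m).mulVec (star z)) =
      z ⟨0, by omega⟩ * (starRingEnd ℂ) (z ⟨n-1, by omega⟩)
      + z ⟨n-1, by omega⟩ * (starRingEnd ℂ) (z ⟨0, by omega⟩)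
      + dotProduct (midv n z) ((Hmat (n-2) (m-1)).mulVec (star (midv n z))) := by
  simp only [dotProduct]
  rw [sum_split hn (f := fun i => z i * ((Hmat n m).mulVec (star z)) i)]
  rw [Hrow0 hm hn, HrowN hm hn]
  have hmid : ∀ k : Fin (n-2), (Hmat n m).mulVec (star z) ⟨k.1+1, by have := k.isLt; omega⟩
      = (Hmat (n-2) (m-1)).mulVec (star (midv n z)) k := by
    intro k
    rw [Hrowmid hm hn]
    rfl
  have : (∑ j : Fin (n-2), z ⟨j.1+1, by have := j.isLt; omega⟩ * (Hmat n m).mulVec (star z) ⟨j.1+1, by have := j.isLt; omega⟩)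
      = ∑ j : Fin (n-2), midv n z j * (Hmat (n-2) (m-1)).mulVec (star (midv n z)) j := by
    apply Finset.sum_congr rfl
    intro j _
    rw [hmid j]
    rfl
  rw [this]
  simp only [Pi.star_apply, RCLike.star_def]
  ring

end hm

lemma mulVec_eq {n : ℕ} (M : Matrix (Fin n) (Fin n) ℂ) (z : Fin n → ℂ) (i : Fin n) :
    M.mulVec z i = ∑ j, M i j * z j := rfl

section rows
variable {m n : ℕ} (μ c : ℂ) (x : Fin (n - 2) → ℂ) (A : Matrix (Fin (n - 2)) (Fin (n - 2)) ℂ)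

lemma mkS00 (hn : 3 ≤ n) : mkS n m μ c x A ⟨0, by omega⟩ ⟨0, by omega⟩ = μ := by
  unfold mkS; rw [dif_pos rfl, dif_pos rfl]

lemma mkS0N (hn : 3 ≤ n) : mkS n m μ c x A ⟨0, by omega⟩ ⟨n-1, by omega⟩ = c := by
  unfold mkS
  rw [dif_pos rfl, dif_neg (by simp; omega), dif_pos rfl]

lemma mkS0mid (hn : 3 ≤ n) (j : Fin (n-2)) :
    mkS n m μ c x A ⟨0, by omega⟩ ⟨j.1+1, by have := j.isLt; omega⟩
      = -μ * ∑ k, ∑ l, (starRingEnd ℂ) (x k) * Hmat (n-2) (m-1) k l * A l j := by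
  have hj := j.isLt
  unfold mkS
  rw [dif_pos rfl, dif_neg (by simp), dif_neg (by simp; omega)]
  have e : (⟨(j.1+1)-1, by omega⟩ : Fin (n-2)) = j := by apply Fin.ext; simp
  simp only []
  rw [e]

lemma mkSmid0 (hn : 3 ≤ n) (i : Fin (n-2)) :
    mkS n m μ c x A ⟨i.1+1, by have := i.isLt; omega⟩ ⟨0, by omega⟩ = 0 := by
  have hi := i.isLt
  unfold mkS
  rw [dif_neg (by simp), dif_neg (by simp; omega), dif_pos rfl]

lemma mkSmidN (hn : 3 ≤ n) (i : Fin (n-2)) :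
    mkS n m μ c x A ⟨i.1+1, by have := i.isLt; omega⟩ ⟨n-1, by omega⟩ = x i := by
  have hi := i.isLt
  unfold mkS
  rw [dif_neg (by simp), dif_neg (by simp; omega), dif_neg (by simp; omega), dif_pos rfl]
  have e : (⟨(i.1+1)-1, by omega⟩ : Fin (n-2)) = i := by apply Fin.ext; simp
  rw [e]

lemma mkSmidmid (hn : 3 ≤ n) (i j : Fin (n-2)) :
    mkS n m μ c x A ⟨i.1+1, by have := i.isLt; omega⟩ ⟨j.1+1, by have := j.isLt; omega⟩
      = A i j := by
  have hi := i.isLt; have hj := j.isLt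
  unfold mkS
  rw [dif_neg (by simp), dif_neg (by simp; omega), dif_neg (by simp), dif_neg (by simp; omega)]
  have e1 : (⟨(i.1+1)-1, by omega⟩ : Fin (n-2)) = i := by apply Fin.ext; simp
  have e2 : (⟨(j.1+1)-1, by omega⟩ : Fin (n-2)) = j := by apply Fin.ext; simp
  rw [e1, e2]

lemma mkSN0 (hn : 3 ≤ n) : mkS n m μ c x A ⟨n-1, by omega⟩ ⟨0, by omega⟩ = 0 := by
  unfold mkS
  rw [dif_neg (by simp; omega), dif_pos rfl, if_neg (by simp; omega)]

lemma mkSNmid (hn : 3 ≤ n) (j : Fin (n-2)) :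
    mkS n m μ c x A ⟨n-1, by omega⟩ ⟨j.1+1, by have := j.isLt; omega⟩ = 0 := by
  have hj := j.isLt
  unfold mkS
  rw [dif_neg (by simp; omega), dif_pos rfl, if_neg (by simp; omega)]

lemma mkSNN (hn : 3 ≤ n) :
    mkS n m μ c x A ⟨n-1, by omega⟩ ⟨n-1, by omega⟩ = 1 / (starRingEnd ℂ) μ := by
  unfold mkS
  rw [dif_neg (by simp; omega), dif_pos rfl, if_pos rfl]

lemma UrowN (hn : 3 ≤ n) (z : Fin n → ℂ) :
    (mkS n m μ c x A).mulVec z ⟨n-1, by omega⟩ = (1 / (starRingEnd ℂ) μ) * z ⟨n-1, by omega⟩ := by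
  rw [mulVec_eq, sum_split hn, mkSN0 μ c x A hn, mkSNN μ c x A hn]
  have : (∑ j : Fin (n-2), mkS n m μ c x A ⟨n-1, by omega⟩ ⟨j.1+1, by have := j.isLt; omega⟩ * z ⟨j.1+1, by have := j.isLt; omega⟩) = 0 := by
    apply Finset.sum_eq_zero
    intro j _
    rw [mkSNmid μ c x A hn j, zero_mul]
  rw [this]
  ring

lemma Urowmid (hn : 3 ≤ n) (z : Fin n → ℂ) (i : Fin (n-2)) :
    (mkS n m μ c x A).mulVec z ⟨i.1+1, by have := i.isLt; omega⟩
      = (A.mulVec (midv n z)) i + x i * z ⟨n-1, by omega⟩ := by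
  rw [mulVec_eq, sum_split hn, mkSmid0 μ c x A hn i, mkSmidN μ c x A hn i]
  have : (∑ j : Fin (n-2), mkS n m μ c x A ⟨i.1+1, by have := i.isLt; omega⟩ ⟨j.1+1, by have := j.isLt; omega⟩ * z ⟨j.1+1, by have := j.isLt; omega⟩)
      = ∑ j : Fin (n-2), A i j * midv n z j := by
    apply Finset.sum_congr rfl
    intro j _
    rw [mkSmidmid μ c x A hn i j]
    rfl
  rw [this]
  simp only [zero_mul, zero_add]
  rfl

lemma Urow0 (hn : 3 ≤ n) (z : Fin n → ℂ) :
    (mkS n m μ c x A).mulVec z ⟨0, by omega⟩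
      = μ * z ⟨0, by omega⟩
        - μ * dotProduct (star x) ((Hmat (n-2) (m-1)).mulVec (A.mulVec (midv n z)))
        + c * z ⟨n-1, by omega⟩ := by
  rw [mulVec_eq, sum_split hn, mkS00 μ c x A hn, mkS0N μ c x A hn]
  have h1 : (∑ j : Fin (n-2), mkS n m μ c x A ⟨0, by omega⟩ ⟨j.1+1, by have := j.isLt; omega⟩ * z ⟨j.1+1, by have := j.isLt; omega⟩)
      = ∑ j : Fin (n-2), ∑ k, ∑ l, -μ * ((starRingEnd ℂ) (x k) * (Hmat (n-2) (m-1) k l * (A l j * midv n z j))) := by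
    apply Finset.sum_congr rfl
    intro j _
    rw [mkS0mid μ c x A hn j]
    rw [mul_comm (-μ) _, Finset.sum_mul, Finset.sum_mul]
    apply Finset.sum_congr rfl
    intro k _
    rw [Finset.sum_mul, Finset.sum_mul]
    apply Finset.sum_congr rfl
    intro l _
    unfold midv
    ring
  rw [h1]
  have h2 : (∑ j : Fin (n-2), ∑ k, ∑ l, -μ * ((starRingEnd ℂ) (x k) * (Hmat (n-2) (m-1) k l * (A l j * midv n z j))))
      = -μ * dotProduct (star x) ((Hmat (n-2) (m-1)).mulVec (A.mulVec (midv n z))) := by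
    simp only [dotProduct, Matrix.mulVec, Finset.mul_sum, Pi.star_apply, RCLike.star_def]
    rw [Finset.sum_comm]
    exact Finset.sum_congr rfl fun k _ => Finset.sum_comm
  rw [h2]
  ring

end rows

section form
variable {d : ℕ}

lemma star_dot (u v : Fin d → ℂ) :
    (starRingEnd ℂ) (dotProduct u v) = dotProduct (star u) (star v) := by
  simp [dotProduct, map_sum]

lemma starH (a : ℕ) (b : ℕ) (v : Fin a → ℂ) :
    star ((Hmat a b).mulVec v) = (Hmat a b).mulVec (star v) := by
  funext k
  simp only [Pi.star_apply, Matrix.mulVec, dotProduct, RCLike.star_def, map_sum, map_mul,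
    Hreal]

lemma Hform_symm (a b : ℕ) (u v : Fin a → ℂ) :
    dotProduct u ((Hmat a b).mulVec v) = dotProduct v ((Hmat a b).mulVec u) := by
  simp only [dotProduct, Matrix.mulVec, Finset.mul_sum]
  rw [Finset.sum_comm]
  apply Finset.sum_congr rfl
  intro l _
  apply Finset.sum_congr rfl
  intro k _
  rw [Hsym a b k l]
  ring

lemma Ainv (b : ℕ) (A : Matrix (Fin d) (Fin d) ℂ)
    (hA : A.transpose * Hmat d b * A.map (starRingEnd ℂ) = Hmat d b) (u v : Fin d → ℂ) :
    dotProduct (A.mulVec u) ((Hmat d b).mulVec (star (A.mulVec v)))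
      = dotProduct u ((Hmat d b).mulVec (star v)) := by
  have h1 : star (A.mulVec v) = (A.map (starRingEnd ℂ)).mulVec (star v) := by
    funext j
    simp [Matrix.mulVec, dotProduct, map_sum, Matrix.map_apply]
  rw [h1, Matrix.mulVec_mulVec]
  rw [show A.mulVec u = Matrix.vecMul u A.transpose from (Matrix.vecMul_transpose A u).symm]
  rw [← Matrix.dotProduct_mulVec, Matrix.mulVec_mulVec, ← Matrix.mul_assoc, hA]

end form

section key
variable {m n : ℕ} (μ c : ℂ) (x : Fin (n - 2) → ℂ) (A : Matrix (Fin (n - 2)) (Fin (n - 2)) ℂ)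

lemma keyQ (hm : 1 ≤ m) (hn : 3 ≤ n) (hμ : μ ≠ 0)
    (hA : A.transpose * Hmat (n-2) (m-1) * A.map (starRingEnd ℂ) = Hmat (n-2) (m-1))
    (z : Fin n → ℂ) :
    dotProduct ((mkS n m μ c x A).mulVec z)
        ((Hmat n m).mulVec (star ((mkS n m μ c x A).mulVec z)))
      = dotProduct z ((Hmat n m).mulVec (star z))
        + (z ⟨n-1, by omega⟩ * (starRingEnd ℂ) (z ⟨n-1, by omega⟩))
          * (c/μ + (starRingEnd ℂ) c / (starRingEnd ℂ) μ
             + dotProduct x ((Hmat (n-2) (m-1)).mulVec (star x))) := by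
  have hμ' : (starRingEnd ℂ) μ ≠ 0 := by simpa using hμ
  set H' := Hmat (n-2) (m-1) with hH'
  set w := (mkS n m μ c x A).mulVec z with hwdef
  set z' := midv n z with hz'
  set v := A.mulVec z' with hv
  set zN := z ⟨n-1, by omega⟩ with hzN
  set T := dotProduct (star x) (H'.mulVec v) with hT
  rw [Qdecomp hm hn w, Qdecomp hm hn z]
  have hw0 : w ⟨0, by omega⟩ = μ * z ⟨0, by omega⟩ - μ * T + c * zN := Urow0 μ c x A hn z
  have hwN : w ⟨n-1, by omega⟩ = (1 / (starRingEnd ℂ) μ) * zN := UrowN μ c x A hn z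
  have hwmid : midv n w = v + zN • x := by
    funext k
    have := Urowmid (m := m) μ c x A hn z k
    simp only [Pi.add_apply, Pi.smul_apply, smul_eq_mul]
    rw [show midv n w k = (mkS n m μ c x A).mulVec z ⟨k.1+1, by have := k.isLt; omega⟩ from rfl]
    rw [this]
    ring
  have rA : dotProduct v (H'.mulVec (star v))
      = dotProduct z' (H'.mulVec (star z')) := Ainv (m-1) A hA z' z'
  have rT1 : dotProduct v (H'.mulVec (star x)) = T := by
    rw [Hform_symm]
  have rT2 : dotProduct x (H'.mulVec (star v)) = (starRingEnd ℂ) T := by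
    rw [hT, star_dot, star_star, ← starH]
  have hmidQ : dotProduct (midv n w) (H'.mulVec (star (midv n w)))
      = dotProduct z' (H'.mulVec (star z'))
        + (starRingEnd ℂ) zN * T + zN * (starRingEnd ℂ) T
        + (zN * (starRingEnd ℂ) zN) * dotProduct x (H'.mulVec (star x)) := by
    rw [hwmid]
    rw [star_add, star_smul, Matrix.mulVec_add, Matrix.mulVec_smul]
    rw [dotProduct_add, add_dotProduct, add_dotProduct,
        smul_dotProduct, smul_dotProduct,
        dotProduct_smul, dotProduct_smul]
    rw [rA, rT1, rT2]
    simp only [smul_eq_mul, RCLike.star_def]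
    ring
  rw [hmidQ, hw0, hwN]
  simp only [map_mul, map_add, map_sub, map_div₀, map_one, Complex.conj_conj]
  field_simp
  ring


end key


lemma keyQre {m n : ℕ} (μ c : ℂ) (x : Fin (n - 2) → ℂ) (A : Matrix (Fin (n - 2)) (Fin (n - 2)) ℂ)
    (hm : 1 ≤ m) (hn : 3 ≤ n) (hμ : μ ≠ 0)
    (hA : A.transpose * Hmat (n-2) (m-1) * A.map (starRingEnd ℂ) = Hmat (n-2) (m-1))
    (hc : 2 * (c / μ).re + (dotProduct x ((Hmat (n - 2) (m - 1)).mulVec (star x))).re = 0)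
    (z : Fin n → ℂ) :
    (dotProduct ((mkS n m μ c x A).mulVec z)
        ((Hmat n m).mulVec (star ((mkS n m μ c x A).mulVec z)))).re
      = (dotProduct z ((Hmat n m).mulVec (star z))).re := by
  rw [keyQ μ c x A hm hn hμ hA z]
  rw [Complex.add_re]
  have h1 : z ⟨n-1, by omega⟩ * (starRingEnd ℂ) (z ⟨n-1, by omega⟩)
      = (Complex.normSq (z ⟨n-1, by omega⟩) : ℂ) := Complex.mul_conj _
  have h2 : ((starRingEnd ℂ) c / (starRingEnd ℂ) μ) = (starRingEnd ℂ) (c/μ) := (map_div₀ _ _ _).symm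
  rw [h1, h2]
  have h3 : ((Complex.normSq (z ⟨n-1, by omega⟩) : ℂ) * ((c/μ) + (starRingEnd ℂ) (c/μ)
      + dotProduct x ((Hmat (n-2) (m-1)).mulVec (star x)))).re
      = Complex.normSq (z ⟨n-1, by omega⟩) * ((c/μ) + (starRingEnd ℂ) (c/μ)
      + dotProduct x ((Hmat (n-2) (m-1)).mulVec (star x))).re := by
    simp [Complex.mul_re]
  rw [h3]
  have h4 : ((c/μ) + (starRingEnd ℂ) (c/μ)
      + dotProduct x ((Hmat (n-2) (m-1)).mulVec (star x))).re = 0 := by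
    simp only [Complex.add_re, Complex.conj_re]
    linarith [hc]
  rw [h4]
  ring

lemma Qscale {k : ℕ} (M : Matrix (Fin k) (Fin k) ℂ) (r : ℝ) (z : Fin k → ℂ) :
    dotProduct (r • z) (M.mulVec (star (r • z)))
      = ((r^2 : ℝ) : ℂ) * dotProduct z (M.mulVec (star z)) := by
  simp only [dotProduct, Matrix.mulVec, Pi.smul_apply, Pi.star_apply, Complex.real_smul,
    RCLike.star_def, map_mul, Complex.conj_ofReal, Finset.mul_sum, Complex.ofReal_pow]
  apply Finset.sum_congr rfl
  intro i _
  apply Finset.sum_congr rfl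
  intro j _
  ring

lemma powkey (a : ℝ) (ha : 0 < a) (s : ℚ) (hs : -(1/2 : ℚ) ≤ s) (r p q : ℕ)
    (hrel : (r:ℚ) + q - 1 = s * p) :
    (a ^ (((1/(s+1):ℚ):ℝ))) ^ (2*r) * ((a ^ (((1/(s+1):ℚ):ℝ))) ^ (2*p)
      * (a ^ (((1/(s+1):ℚ):ℝ))) ^ (2*q))
      = (a ^ (((1/(s+1):ℚ):ℝ)))^2 * a ^ (2*p) := by
  have hs1 : (0:ℚ) < s + 1 := by linarith
  have hs1' : (s:ℚ) + 1 ≠ 0 := by linarith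
  set t : ℝ := ((1/(s+1):ℚ):ℝ) with ht
  have hrw : ∀ N : ℕ, (a ^ t) ^ N = a ^ (t * N) := by
    intro N
    rw [← Real.rpow_natCast (a ^ t) N, ← Real.rpow_mul ha.le]
  have hrw2 : a ^ (2*p) = a ^ ((2*p : ℕ) : ℝ) := by
    rw [Real.rpow_natCast]
  rw [hrw, hrw, hrw, show ((a^t)^2 = (a^t)^(2:ℕ)) from by norm_num, hrw, hrw2,
      ← Real.rpow_add ha, ← Real.rpow_add ha, ← Real.rpow_add ha]
  congr 1
  have hq : (1/(s+1)) * ((2*r : ℕ) : ℚ) + (1/(s+1)) * ((2*p : ℕ) : ℚ) + (1/(s+1)) * ((2*q : ℕ) : ℚ)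
      = (1/(s+1)) * ((2 : ℕ) : ℚ) + ((2*p : ℕ) : ℚ) := by
    push_cast
    have h' : (2*(r:ℚ)) + 2*p + 2*q = 2 + 2*p*(s+1) := by linear_combination 2 * hrel
    calc _ = 1/(s+1) * ((2*(r:ℚ)) + 2*p + 2*q) := by ring
      _ = 1/(s+1) * (2 + 2*p*(s+1)) := by rw [h']
      _ = 1/(s+1)*2 + 2*p*((s+1)/(s+1)) := by ring
      _ = _ := by rw [div_self hs1', mul_one]
  have := congrArg (fun y : ℚ => (y : ℝ)) hq
  have ht' : t = 1/((s:ℝ)+1) := by rw [ht]; push_cast; ring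
  rw [ht']
  push_cast at this ⊢
  linarith [this]

/-- Part (iii) of Theorem 2: for F(z,u) = Σ C_{rpq} u^r |zₙ|^{2p} ⟨z,z⟩^q with
(r+q−1)/p = s for all non-zero coefficients, every map
(z,w) ↦ (λUz, λ²w) with U ∈ S (parameter μ) and λ = |μ|^{1/(s+1)} satisfies
F(λUz, λ²u) = λ²F(z,u) and maps M = {Im w = ⟨z,z⟩ + F(z, Re w)} onto itself. -/
theorem stmt18 {n m : ℕ} (hm : 1 ≤ m) (hn : 3 ≤ n) (hnm : 2 * m ≤ n)
    (s : ℚ) (hs : -(1 / 2) ≤ s)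
    (supp : Finset (ℕ × ℕ × ℕ)) (C : ℕ × ℕ × ℕ → ℝ)
    (hCsupp : ∀ k, C k ≠ 0 → k ∈ supp)
    (hC : ∀ r p q : ℕ, C (r, p, q) ≠ 0 → 1 ≤ p ∧ (r : ℚ) + q - 1 = s * p)
    (F : (Fin n → ℂ) → ℝ → ℝ)
    (hF : ∀ (z : Fin n → ℂ) (u : ℝ), F z u =
      ∑ k ∈ supp, C k * u ^ k.1 * ‖z ⟨n - 1, by omega⟩‖ ^ (2 * k.2.1) *
        ((dotProduct z ((Hmat n m).mulVec (star z))).re) ^ k.2.2)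
    (μ c : ℂ) (x : Fin (n - 2) → ℂ) (A : Matrix (Fin (n - 2)) (Fin (n - 2)) ℂ)
    (hμ : μ ≠ 0)
    (hA : A.transpose * Hmat (n - 2) (m - 1) * A.map (starRingEnd ℂ) = Hmat (n - 2) (m - 1))
    (hc : 2 * (c / μ).re + (dotProduct x ((Hmat (n - 2) (m - 1)).mulVec (star x))).re = 0) :
    let U := mkS n m μ c x A
    let lam : ℝ := ‖μ‖ ^ (((1 / (s + 1) : ℚ) : ℝ))
    (∀ (z : Fin n → ℂ) (u : ℝ), F (lam • U.mulVec z) (lam ^ 2 * u) = lam ^ 2 * F z u) ∧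
    (∀ (z : Fin n → ℂ) (w : ℂ),
      (w.im = (dotProduct z ((Hmat n m).mulVec (star z))).re + F z w.re) ↔
      ((lam ^ 2 • w).im =
        (dotProduct (lam • U.mulVec z)
          ((Hmat n m).mulVec (star (lam • U.mulVec z)))).re +
        F (lam • U.mulVec z) (lam ^ 2 • w).re)) := by
  intro U lam
  have ha : 0 < ‖μ‖ := norm_pos_iff.mpr hμ
  have hlam : 0 < lam := Real.rpow_pos_of_pos ha _
  have habs' : ∀ z : Fin n → ℂ, ‖(lam • U.mulVec z) ⟨n-1, by omega⟩‖
      = lam * ‖z ⟨n-1, by omega⟩‖ / ‖μ‖ := by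
    intro z
    have e : (lam • U.mulVec z) ⟨n-1, by omega⟩
        = (lam : ℂ) * ((1/(starRingEnd ℂ) μ) * z ⟨n-1, by omega⟩) := by
      simp only [Pi.smul_apply, Complex.real_smul]
      rw [UrowN (m := m) μ c x A hn z]
    rw [e]
    simp only [norm_mul, norm_div, Complex.norm_conj, Complex.norm_real, Real.norm_eq_abs, norm_one]
    rw [abs_of_pos hlam]
    ring
  have hQz : ∀ z : Fin n → ℂ,
      (dotProduct (lam • U.mulVec z) ((Hmat n m).mulVec (star (lam • U.mulVec z)))).re
      = lam^2 * (dotProduct z ((Hmat n m).mulVec (star z))).re := by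
    intro z
    rw [Qscale]
    have : (((lam^2 : ℝ):ℂ) * dotProduct (U.mulVec z)
        ((Hmat n m).mulVec (star (U.mulVec z)))).re
        = lam^2 * (dotProduct (U.mulVec z) ((Hmat n m).mulVec (star (U.mulVec z)))).re := by
      simp [Complex.mul_re, ← Complex.ofReal_pow]
    rw [this, keyQre μ c x A hm hn hμ hA hc z]
  have h1 : ∀ (z : Fin n → ℂ) (u : ℝ), F (lam • U.mulVec z) (lam ^ 2 * u) = lam ^ 2 * F z u := by
    intro z u
    rw [hF, hF, Finset.mul_sum]
    apply Finset.sum_congr rfl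
    rintro ⟨r, p, q⟩ hk
    by_cases hCk : C (r, p, q) = 0
    · simp [hCk]
    · obtain ⟨hp, hrel⟩ := hC r p q hCk
      simp only
      rw [habs' z, hQz z]
      have hkey := powkey (‖μ‖) ha s hs r p q hrel
      have hane : (‖μ‖) ^ (2*p) ≠ 0 := by positivity
      simp only [mul_pow, div_pow, ← pow_mul]
      field_simp
      linear_combination (u^r * ‖z ⟨n-1, by omega⟩‖^(2*p)
        * ((dotProduct z ((Hmat n m).mulVec (star z))).re)^q) * hkey
  refine ⟨h1, ?_⟩
  intro z w
  have him : (lam^2 • w).im = lam^2 * w.im := by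
    simp [Complex.real_smul, ← Complex.ofReal_pow]
  have hre : (lam^2 • w).re = lam^2 * w.re := by
    simp [Complex.real_smul, ← Complex.ofReal_pow]
  rw [him, hre, hQz z, h1 z w.re]
  constructor
  · intro h
    rw [h]
    ring
  · intro h
    have hl2 : (lam^2 : ℝ) ≠ 0 := by positivity
    have h2 : lam^2 * w.im = lam^2 * ((dotProduct z ((Hmat n m).mulVec (star z))).re
        + F z w.re) := by
      rw [h]; ring
    exact mul_left_cancel₀ hl2 h2
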